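/- arXiv:math/0601186 — 2 statements merged into one kernel-verified Lean document; each statement's English description precedes it below -/
import Mathlib

section
/- Let m \u2265 1 and define the formal power series \u03c6(z) in z with polynomial coefficients in p_1,\u2026,p_m,q_1,\u2026,q_m by \u03c6(z) = \u220f_{i=1}^m [1 + p_i q_i z\u00b2 / ((1 - r_{i-1} z)(1 - (q_i + r_i) z))], where r_i = p_1 + \u22ef + p_i. Then every coefficient of \u03c6(z), as a polynomial in p_1,\u2026,p_m,q_1,\u2026,q_m, is nonnegative. -/
/-- The polynomial ring `ℤ[p_1,…,p_m,q_1,…,q_m]`. -/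
abbrev PQRing (m : ℕ) : Type := MvPolynomial (Fin m ⊕ Fin m) ℤ

noncomputable def pvar {m : ℕ} (i : Fin m) : PQRing m := MvPolynomial.X (Sum.inl i)
noncomputable def qvar {m : ℕ} (i : Fin m) : PQRing m := MvPolynomial.X (Sum.inr i)

/-- `r_i = p_1 + ⋯ + p_i` (with `r_0 = 0`). -/
noncomputable def rsum {m : ℕ} (i : ℕ) : PQRing m :=
  ∑ j : Fin m, if (j : ℕ) < i then pvar j else 0

/-- The geometric series `1/(1 - a z) = ∑_{n ≥ 0} a^n z^n`. -/
noncomputable def geom {A : Type*} [CommRing A] (a : A) : PowerSeries A :=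
  PowerSeries.mk fun n => a ^ n

/-- The series `φ(z) = ∏_{i=1}^m [1 + p_i q_i z² / ((1 - r_{i-1}z)(1 - (q_i + r_i)z))]`
(0-indexed: `r_{i-1} ↦ rsum i`, `r_i ↦ rsum (i+1)`), with the reciprocals
expanded as geometric series. -/
noncomputable def phi8 (m : ℕ) : PowerSeries (PQRing m) :=
  ∏ i : Fin m,
    (1 + PowerSeries.C (pvar i * qvar i) * PowerSeries.X ^ 2 *
      geom (rsum (i : ℕ)) * geom (qvar i + rsum ((i : ℕ) + 1)))

/-- Subsemiring of polynomials with nonnegative coefficients. -/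
noncomputable def nnSet (σ : Type*) [DecidableEq σ] : Subsemiring (MvPolynomial σ ℤ) where
  carrier := {p | ∀ d, 0 ≤ p.coeff d}
  zero_mem' := by intro d; simp
  one_mem' := by
    intro d
    rw [MvPolynomial.coeff_one]
    split <;> norm_num
  add_mem' := by
    intro a b ha hb d
    rw [MvPolynomial.coeff_add]
    exact add_nonneg (ha d) (hb d)
  mul_mem' := by
    intro a b ha hb d
    rw [MvPolynomial.coeff_mul]
    exact Finset.sum_nonneg fun x _ => mul_nonneg (ha x.1) (hb x.2)

/-- Subsemiring of power series all of whose coefficients lie in `nnSet`. -/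
noncomputable def nnSeries (m : ℕ) : Subsemiring (PowerSeries (PQRing m)) where
  carrier := {f | ∀ n, PowerSeries.coeff n f ∈ nnSet (Fin m ⊕ Fin m)}
  zero_mem' := by intro n; simp
  one_mem' := by
    intro n
    rw [PowerSeries.coeff_one]
    split
    · exact one_mem _
    · exact zero_mem _
  add_mem' := by
    intro a b ha hb n
    rw [map_add]
    exact add_mem (ha n) (hb n)
  mul_mem' := by
    intro a b ha hb n
    rw [PowerSeries.coeff_mul]
    exact sum_mem fun x _ => mul_mem (ha x.1) (hb x.2)

lemma pvar_mem {m : ℕ} (i : Fin m) : pvar i ∈ nnSet (Fin m ⊕ Fin m) := by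
  intro d
  rw [pvar, MvPolynomial.coeff_X']
  split <;> norm_num

lemma qvar_mem {m : ℕ} (i : Fin m) : qvar i ∈ nnSet (Fin m ⊕ Fin m) := by
  intro d
  rw [qvar, MvPolynomial.coeff_X']
  split <;> norm_num

lemma rsum_mem {m : ℕ} (i : ℕ) : rsum i ∈ nnSet (Fin m ⊕ Fin m) := by
  rw [rsum]
  refine sum_mem fun j _ => ?_
  split
  · exact pvar_mem j
  · exact zero_mem _

lemma C_mem {m : ℕ} {a : PQRing m} (ha : a ∈ nnSet (Fin m ⊕ Fin m)) :
    PowerSeries.C a ∈ nnSeries m := by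
  intro n
  rw [PowerSeries.coeff_C]
  split
  · exact ha
  · exact zero_mem _

lemma X_mem {m : ℕ} : (PowerSeries.X : PowerSeries (PQRing m)) ∈ nnSeries m := by
  intro n
  rw [PowerSeries.coeff_X]
  split
  · exact one_mem _
  · exact zero_mem _

lemma geom_mem {m : ℕ} {a : PQRing m} (ha : a ∈ nnSet (Fin m ⊕ Fin m)) :
    geom a ∈ nnSeries m := by
  intro n
  rw [geom, PowerSeries.coeff_mk]
  exact pow_mem ha n

/-- Every coefficient of `φ(z)`, as a polynomial in the `p`'s
and `q`'s, is nonnegative. -/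
theorem phi_coefficients_nonneg (m : ℕ) (hm : 1 ≤ m) :
    ∀ n d, 0 ≤ MvPolynomial.coeff d (PowerSeries.coeff n (phi8 m)) := by
  intro n d
  have h : phi8 m ∈ nnSeries m := by
    refine Subsemiring.prod_mem _ fun i _ => ?_
    refine add_mem (one_mem _) (mul_mem (mul_mem (mul_mem ?_ (pow_mem X_mem 2)) ?_) ?_)
    · exact C_mem (mul_mem (pvar_mem i) (qvar_mem i))
    · exact geom_mem (rsum_mem _)
    · exact geom_mem (add_mem (qvar_mem i) (rsum_mem _))
  exact h n d
end

section
/- Let \u03c6(z) be a formal power series with constant term 1 over a commutative \u211a-algebra, let w = w(z) satisfy w = z\u03c6(w), and define C(z) = 1/(-z\u00b2 d/dz (1/w)). Then C(z) = \u03c6(w) - w \u03c6'(w), and consequently for all k \u2265 2, [z^{k-1}] C(z) = -(1/(k-1)) [y^{k-3}] \u03c6''(y) \u03c6(y)^{k-1}. -/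
/-- Composition `f(g)` of formal power series (intended for `g` with zero
constant term). -/
noncomputable def pscomp {A : Type*} [CommRing A] (f g : PowerSeries A) : PowerSeries A :=
  PowerSeries.mk fun n =>
    ∑ j ∈ Finset.range (n + 1), PowerSeries.coeff j f * PowerSeries.coeff n (g ^ j)

/-- The formal derivative of a power series. -/
noncomputable def psderiv {A : Type*} [CommRing A] (f : PowerSeries A) : PowerSeries A :=
  PowerSeries.mk fun n => ((n : A) + 1) * PowerSeries.coeff (n + 1) f

namespace LIF
open PowerSeries
variable {A : Type*} [CommRing A]

theorem coeff_psderiv (f : PowerSeries A) (n : ℕ) :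
    coeff n (psderiv f) = ((n : A) + 1) * coeff (n + 1) f := by
  simp [psderiv]

theorem psderiv_eq (f : PowerSeries A) : psderiv f = d⁄dX A f := by
  ext n
  rw [coeff_psderiv, coeff_derivative]
  ring

theorem psderiv_mul (f g : PowerSeries A) :
    psderiv (f * g) = f * psderiv g + g * psderiv f := by
  simp only [psderiv_eq, Derivation.leibniz, smul_eq_mul]

theorem psderiv_add (f g : PowerSeries A) : psderiv (f + g) = psderiv f + psderiv g := by
  simp [psderiv_eq]

theorem psderiv_pow (f : PowerSeries A) (n : ℕ) :
    psderiv (f ^ n) = (n : PowerSeries A) * f ^ (n - 1) * psderiv f := by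
  simp only [psderiv_eq, Derivation.leibniz_pow, smul_eq_mul, nsmul_eq_mul]
  ring

theorem psderiv_X_mul (f : PowerSeries A) : psderiv (X * f) = f + X * psderiv f := by
  rw [psderiv_mul, psderiv_eq X, derivative_X, mul_one, add_comm]

theorem coeff_pow_zero_const {g : PowerSeries A} (hg : constantCoeff g = 0)
    {n j : ℕ} (h : n < j) : coeff n (g ^ j) = 0 := by
  have hx : (X : PowerSeries A) ^ j ∣ g ^ j := pow_dvd_pow_of_dvd (X_dvd_iff.2 hg) j
  exact (X_pow_dvd_iff.1 hx) n h

theorem coeff_mul_pow_zero {g : PowerSeries A} (hg : constantCoeff g = 0)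
    (h : PowerSeries A) {n j : ℕ} (hnj : n < j) : coeff n (h * g ^ j) = 0 := by
  rw [coeff_mul]
  refine Finset.sum_eq_zero fun p hp => ?_
  rw [Finset.HasAntidiagonal.mem_antidiagonal] at hp
  rw [coeff_pow_zero_const hg (lt_of_le_of_lt (le_trans (Nat.le_add_left _ _) hp.le) hnj), mul_zero]

/-- Product-coefficient formula for `h * pscomp f g`. -/
theorem coeff_mul_pscomp {g : PowerSeries A} (hg : constantCoeff g = 0)
    (h f : PowerSeries A) (N : ℕ) :
    coeff N (h * pscomp f g) =
      ∑ m ∈ Finset.range (N + 1), coeff m f * coeff N (h * g ^ m) := by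
  rw [coeff_mul]
  have step : ∀ p ∈ Finset.HasAntidiagonal.antidiagonal N,
      coeff p.1 h * coeff p.2 (pscomp f g) =
      ∑ m ∈ Finset.range (N + 1), coeff m f * (coeff p.1 h * coeff p.2 (g ^ m)) := by
    intro p hp
    rw [Finset.HasAntidiagonal.mem_antidiagonal] at hp
    have hp2 : p.2 + 1 ≤ N + 1 := by omega
    rw [pscomp, coeff_mk, Finset.mul_sum]
    rw [Finset.sum_subset (Finset.range_subset_range.2 hp2)]
    · exact Finset.sum_congr rfl fun m _ => by ring
    · intro m hm hm'
      rw [Finset.mem_range, not_lt] at hm'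
      rw [coeff_pow_zero_const hg (by omega), mul_zero, mul_zero]
  rw [Finset.sum_congr rfl step, Finset.sum_comm]
  exact Finset.sum_congr rfl fun m _ => by rw [coeff_mul, Finset.mul_sum]

theorem coeff_pscomp {g : PowerSeries A} (hg : constantCoeff g = 0) (f : PowerSeries A) (N : ℕ) :
    coeff N (pscomp f g) = ∑ m ∈ Finset.range (N + 1), coeff m f * coeff N (g ^ m) := by
  have := coeff_mul_pscomp hg 1 f N
  simpa using this

theorem pscomp_add (f₁ f₂ g : PowerSeries A) :
    pscomp (f₁ + f₂) g = pscomp f₁ g + pscomp f₂ g := by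
  ext n
  simp [pscomp, add_mul, Finset.sum_add_distrib]

theorem pscomp_zero (g : PowerSeries A) : pscomp 0 g = 0 := by
  ext n; simp [pscomp]

theorem pscomp_neg (f g : PowerSeries A) : pscomp (-f) g = - pscomp f g := by
  ext n; simp [pscomp, Finset.sum_neg_distrib]

theorem pscomp_sub (f₁ f₂ g : PowerSeries A) :
    pscomp (f₁ - f₂) g = pscomp f₁ g - pscomp f₂ g := by
  rw [sub_eq_add_neg, pscomp_add, pscomp_neg, sub_eq_add_neg]

theorem pscomp_sum {ι : Type*} (s : Finset ι) (F : ι → PowerSeries A) (g : PowerSeries A) :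
    pscomp (∑ i ∈ s, F i) g = ∑ i ∈ s, pscomp (F i) g := by
  classical
  induction s using Finset.induction_on with
  | empty => simp [pscomp_zero]
  | insert _ _ h ih => rw [Finset.sum_insert h, Finset.sum_insert h, pscomp_add, ih]

theorem pscomp_C_mul_X_pow {g : PowerSeries A} (hg : constantCoeff g = 0) (a : A) (m : ℕ) :
    pscomp (C a * X ^ m) g = C a * g ^ m := by
  ext N
  rw [pscomp, coeff_mk, coeff_C_mul]
  simp only [coeff_C_mul, coeff_X_pow]
  by_cases hm : m ≤ N
  · rw [Finset.sum_eq_single m]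
    · simp
    · intro b _ hb; simp [hb]
    · intro h; exact absurd (Finset.mem_range.2 (by omega)) h
  · rw [Finset.sum_eq_zero, coeff_pow_zero_const hg (by omega), mul_zero]
    intro b hb
    rw [Finset.mem_range] at hb
    have : ¬ (b = m) := by omega
    simp [this]

theorem pscomp_one {g : PowerSeries A} (hg : constantCoeff g = 0) : pscomp 1 g = 1 := by
  have := pscomp_C_mul_X_pow hg 1 0
  simpa using this

theorem pscomp_X_right (f : PowerSeries A) : pscomp f X = f := by
  ext N
  rw [pscomp, coeff_mk, Finset.sum_eq_single N]
  · simp [coeff_X_pow]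
  · intro b hb hbN
    rw [coeff_X_pow, if_neg (Ne.symm hbN), mul_zero]
  · intro h; exact absurd (Finset.self_mem_range_succ N) h

/-- truncation as a power series -/
noncomputable def ptrunc (K : ℕ) (f : PowerSeries A) : PowerSeries A :=
  ∑ m ∈ Finset.range K, C (coeff m f) * X ^ m

theorem coeff_ptrunc (K : ℕ) (f : PowerSeries A) (i : ℕ) :
    coeff i (ptrunc K f) = if i < K then coeff i f else 0 := by
  rw [ptrunc, map_sum]
  simp only [coeff_C_mul, coeff_X_pow]
  by_cases h : i < K
  · rw [Finset.sum_eq_single i]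
    · simp [h]
    · intro b _ hb; simp [Ne.symm hb]
    · intro hi; exact absurd (Finset.mem_range.2 h) hi
  · rw [if_neg h, Finset.sum_eq_zero]
    intro b hb
    rw [Finset.mem_range] at hb
    have : ¬ ((i : ℕ) = b) := by omega
    simp [this]

/-- tail of a power series -/
noncomputable def tail (K : ℕ) (f : PowerSeries A) : PowerSeries A :=
  PowerSeries.mk fun i => coeff (K + i) f

theorem split (K : ℕ) (f : PowerSeries A) : f = ptrunc K f + X ^ K * tail K f := by
  ext n
  rw [map_add, coeff_ptrunc, coeff_X_pow_mul']
  simp only [tail, coeff_mk]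
  by_cases h : n < K
  · rw [if_pos h, if_neg (show ¬ K ≤ n by omega), add_zero]
  · rw [if_neg h, if_pos (show K ≤ n by omega), zero_add]
    have : K + (n - K) = n := by omega
    rw [this]


theorem coeff_pow_mul_zero {g : PowerSeries A} (hg : constantCoeff g = 0)
    (h : PowerSeries A) {n j : ℕ} (hnj : n < j) : coeff n (g ^ j * h) = 0 := by
  rw [mul_comm]; exact coeff_mul_pow_zero hg h hnj

theorem coeff_mul_congr {a a' b b' : PowerSeries A} (N : ℕ)
    (ha : ∀ m, m ≤ N → coeff m a = coeff m a')
    (hb : ∀ m, m ≤ N → coeff m b = coeff m b') :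
    coeff N (a * b) = coeff N (a' * b') := by
  rw [coeff_mul, coeff_mul]
  refine Finset.sum_congr rfl fun p hp => ?_
  rw [Finset.HasAntidiagonal.mem_antidiagonal] at hp
  rw [ha p.1 (by omega), hb p.2 (by omega)]

theorem coeff_pscomp_congr {g f₁ f₂ : PowerSeries A} (hg : constantCoeff g = 0) (N : ℕ)
    (h : ∀ m, m ≤ N → coeff m f₁ = coeff m f₂) :
    coeff N (pscomp f₁ g) = coeff N (pscomp f₂ g) := by
  rw [coeff_pscomp hg, coeff_pscomp hg]
  refine Finset.sum_congr rfl fun m hm => ?_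
  rw [Finset.mem_range] at hm
  rw [h m (by omega)]

theorem pscomp_X_pow_mul {g : PowerSeries A} (hg : constantCoeff g = 0) (K : ℕ)
    (h : PowerSeries A) : pscomp (X ^ K * h) g = g ^ K * pscomp h g := by
  ext N
  rw [coeff_pscomp hg, coeff_mul_pscomp hg]
  have RHS : ∑ m ∈ Finset.range (N + 1), coeff m h * coeff N (g ^ K * g ^ m)
      = ∑ m ∈ Finset.range (N + 1 - K), coeff m h * coeff N (g ^ (K + m)) := by
    have e1 : ∀ m ∈ Finset.range (N + 1),
        coeff m h * coeff N (g ^ K * g ^ m) = coeff m h * coeff N (g ^ (K + m)) :=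
      fun m _ => by rw [pow_add]
    rw [Finset.sum_congr rfl e1]
    symm
    apply Finset.sum_subset (Finset.range_subset_range.2 (by omega : N + 1 - K ≤ N + 1))
    intro m hm hm'
    rw [Finset.mem_range] at hm hm'
    rw [coeff_pow_zero_const hg (by omega), mul_zero]
  rw [RHS]
  have hz : ∀ i ∈ Finset.Ico 0 (N + 1), i ∉ Finset.Ico K (N + 1) →
      coeff i (X ^ K * h) * coeff N (g ^ i) = 0 := by
    intro i hi hi'
    rw [Finset.mem_Ico] at hi hi'
    rw [coeff_X_pow_mul', if_neg (show ¬ K ≤ i by omega), zero_mul]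
  rw [Finset.range_eq_Ico, ← Finset.sum_subset (Finset.Ico_subset_Ico (Nat.zero_le K) le_rfl) hz]
  have e2 : ∀ i ∈ Finset.Ico K (N + 1),
      coeff i (X ^ K * h) * coeff N (g ^ i) = coeff (i - K) h * coeff N (g ^ i) := by
    intro i hi
    rw [Finset.mem_Ico] at hi
    rw [coeff_X_pow_mul', if_pos hi.1]
  rw [Finset.sum_congr rfl e2, Finset.sum_Ico_eq_sum_range]
  refine Finset.sum_congr rfl fun t _ => ?_
  rw [Nat.add_sub_cancel_left]

theorem pscomp_ptrunc_eq {g : PowerSeries A} (hg : constantCoeff g = 0) (K : ℕ)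
    (f : PowerSeries A) :
    pscomp (ptrunc K f) g = ∑ m ∈ Finset.range K, C (coeff m f) * g ^ m := by
  rw [ptrunc, pscomp_sum]
  exact Finset.sum_congr rfl fun m _ => pscomp_C_mul_X_pow hg _ m

theorem pscomp_decomp {g : PowerSeries A} (hg : constantCoeff g = 0) (K : ℕ)
    (f : PowerSeries A) :
    pscomp f g = (∑ m ∈ Finset.range K, C (coeff m f) * g ^ m)
      + g ^ K * pscomp (tail K f) g := by
  conv_lhs => rw [split K f]
  rw [pscomp_add, pscomp_ptrunc_eq hg, pscomp_X_pow_mul hg]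

theorem coeff_pscomp_ptrunc {g : PowerSeries A} (hg : constantCoeff g = 0) {K N : ℕ}
    (hNK : N < K) (f : PowerSeries A) :
    coeff N (pscomp f g) = coeff N (pscomp (ptrunc K f) g) := by
  conv_lhs => rw [split K f]
  rw [pscomp_add, pscomp_X_pow_mul hg, map_add, coeff_pow_mul_zero hg _ hNK, add_zero]

theorem pscomp_ptrunc_mul {g : PowerSeries A} (hg : constantCoeff g = 0) (K : ℕ)
    (f h : PowerSeries A) :
    pscomp (ptrunc K f * ptrunc K h) g = pscomp (ptrunc K f) g * pscomp (ptrunc K h) g := by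
  rw [ptrunc, ptrunc, Finset.sum_mul_sum, pscomp_sum]
  have e1 : ∀ i ∈ Finset.range K,
      pscomp (∑ j ∈ Finset.range K, C (coeff i f) * X ^ i * (C (coeff j h) * X ^ j)) g
      = ∑ j ∈ Finset.range K, C (coeff i f * coeff j h) * g ^ (i + j) := by
    intro i _
    rw [pscomp_sum]
    refine Finset.sum_congr rfl fun j _ => ?_
    have : C (coeff i f) * X ^ i * (C (coeff j h) * X ^ j)
        = C (coeff i f * coeff j h) * X ^ (i + j) := by
      rw [map_mul, pow_add]; ring
    rw [this, pscomp_C_mul_X_pow hg]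
  rw [Finset.sum_congr rfl e1, pscomp_sum, pscomp_sum]
  have e2 : ∀ (p : PowerSeries A), ∀ i ∈ Finset.range K,
      pscomp (C (coeff i p) * X ^ i) g = C (coeff i p) * g ^ i :=
    fun p i _ => pscomp_C_mul_X_pow hg _ i
  rw [Finset.sum_congr rfl (e2 f), Finset.sum_congr rfl (e2 h), Finset.sum_mul_sum]
  refine Finset.sum_congr rfl fun i _ => Finset.sum_congr rfl fun j _ => ?_
  rw [map_mul, pow_add]; ring

theorem pscomp_mul {g : PowerSeries A} (hg : constantCoeff g = 0) (f h : PowerSeries A) :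
    pscomp (f * h) g = pscomp f g * pscomp h g := by
  ext N
  have hD : ∀ m, m ≤ N → coeff m (f * h) = coeff m (ptrunc (N + 1) f * ptrunc (N + 1) h) := by
    intro m hm
    refine coeff_mul_congr m ?_ ?_ <;>
      · intro i hi
        rw [coeff_ptrunc, if_pos (by omega)]
  rw [coeff_pscomp_congr hg N hD, pscomp_ptrunc_mul hg]
  refine coeff_mul_congr N ?_ ?_ <;>
    · intro m hm
      exact (coeff_pscomp_ptrunc hg (by omega) _).symm

theorem pscomp_pow {g : PowerSeries A} (hg : constantCoeff g = 0) (f : PowerSeries A) (n : ℕ) :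
    pscomp (f ^ n) g = pscomp f g ^ n := by
  induction n with
  | zero => simpa using pscomp_one hg
  | succ n ih => rw [pow_succ, pow_succ, pscomp_mul hg, ih]

theorem constantCoeff_pscomp {g : PowerSeries A} (hg : constantCoeff g = 0)
    (f : PowerSeries A) : constantCoeff (pscomp f g) = constantCoeff f := by
  rw [← coeff_zero_eq_constantCoeff_apply, ← coeff_zero_eq_constantCoeff_apply, coeff_pscomp hg]
  simp

theorem psderiv_zero : psderiv (0 : PowerSeries A) = 0 := by
  ext n; simp [psderiv]

theorem psderiv_one : psderiv (1 : PowerSeries A) = 0 := by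
  rw [psderiv_eq]; exact Derivation.map_one_eq_zero _

theorem psderiv_sub (f g : PowerSeries A) : psderiv (f - g) = psderiv f - psderiv g := by
  simp [psderiv_eq]

theorem psderiv_sum {ι : Type*} (s : Finset ι) (F : ι → PowerSeries A) :
    psderiv (∑ i ∈ s, F i) = ∑ i ∈ s, psderiv (F i) := by
  classical
  induction s using Finset.induction_on with
  | empty => simp [psderiv_zero]
  | insert _ _ h ih => rw [Finset.sum_insert h, Finset.sum_insert h, psderiv_add, ih]

theorem psderiv_C (a : A) : psderiv (C a) = 0 := by
  rw [psderiv_eq]; exact derivative_C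

theorem psderiv_X : psderiv (X : PowerSeries A) = 1 := by
  rw [psderiv_eq]; exact derivative_X

theorem psderiv_pscomp {g : PowerSeries A} (hg : constantCoeff g = 0) (f : PowerSeries A) :
    psderiv (pscomp f g) = pscomp (psderiv f) g * psderiv g := by
  have mono : ∀ (a : A) (m : ℕ), psderiv (pscomp (C a * X ^ m) g)
      = pscomp (psderiv (C a * X ^ m)) g * psderiv g := by
    intro a m
    have h1 : psderiv (C a * X ^ m) = C ((m : A) * a) * X ^ (m - 1) := by
      rw [psderiv_mul, psderiv_C, mul_zero, add_zero, psderiv_pow, psderiv_X, mul_one,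
        ← map_natCast (C (R := A)) m, map_mul]
      ring
    rw [h1, pscomp_C_mul_X_pow hg, pscomp_C_mul_X_pow hg, psderiv_mul, psderiv_C, mul_zero,
      add_zero, psderiv_pow, ← map_natCast (C (R := A)) m, map_mul]
    ring
  have ptr : ∀ (p : PowerSeries A) (K : ℕ), psderiv (pscomp (ptrunc K p) g)
      = pscomp (psderiv (ptrunc K p)) g * psderiv g := by
    intro p K
    rw [ptrunc]
    simp only [pscomp_sum, psderiv_sum, Finset.sum_mul]
    exact Finset.sum_congr rfl fun r _ => mono _ r
  ext N
  have e1 : coeff N (psderiv (pscomp f g))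
      = coeff N (psderiv (pscomp (ptrunc (N + 2) f) g)) := by
    rw [coeff_psderiv, coeff_psderiv, coeff_pscomp_ptrunc hg (show N + 1 < N + 2 by omega) f]
  rw [e1, ptr f (N + 2)]
  refine coeff_mul_congr N ?_ (fun r _ => rfl)
  intro r hr
  refine (coeff_pscomp_congr hg r fun i hi => ?_).symm
  rw [coeff_psderiv, coeff_psderiv, coeff_ptrunc, if_pos (by omega)]

theorem natCast_mul_cancel [Algebra ℚ A] {c : ℕ} (hc : c ≠ 0) {x y : A}
    (h : (c : A) * x = (c : A) * y) : x = y := by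
  have hs : (c : ℚ) • x = (c : ℚ) • y := by
    rw [← map_natCast (algebraMap ℚ A) c] at h
    simpa [Algebra.smul_def] using h
  have h2 := congrArg (fun z => ((c : ℚ))⁻¹ • z) hs
  simpa [smul_smul, inv_mul_cancel₀ (show (c : ℚ) ≠ 0 by exact_mod_cast hc)] using h2

theorem X_pow_mul_cancel {a b : PowerSeries A} {s : ℕ} (h : X ^ s * a = X ^ s * b) : a = b := by
  ext n
  have h2 := congrArg (coeff (n + s)) h
  rwa [coeff_X_pow_mul, coeff_X_pow_mul] at h2

theorem main {A : Type*} [CommRing A] [Algebra ℚ A]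
    (φ w Cs : PowerSeries A)
    (hφ0 : constantCoeff φ = 1)
    (hw0 : constantCoeff w = 0)
    (hw : w = X * pscomp φ w)
    (hC : Cs * X ^ 2 * psderiv w = w ^ 2) :
    Cs = pscomp φ w - w * pscomp (psderiv φ) w ∧
      ∀ k, 2 ≤ k →
        coeff (k - 1) Cs =
          (-(1 / ((k : ℚ) - 1))) • coeff (k - 1)
            (X ^ 2 * psderiv (psderiv φ) * φ ^ (k - 1)) := by
  set u := pscomp φ w with hu
  set q := pscomp (psderiv φ) w with hq
  have hu0 : constantCoeff u = 1 := by rw [hu, constantCoeff_pscomp hw0, hφ0]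
  have huU : IsUnit u := isUnit_iff_constantCoeff.2 (by rw [hu0]; exact isUnit_one)
  have hdw : psderiv w = u + X * psderiv u := by rw [hw, psderiv_X_mul]
  have hdu : psderiv u = q * psderiv w := by rw [hu, hq]; exact psderiv_pscomp hw0 φ
  have F6 : psderiv w * (1 - X * q) = u := by
    have h1 : psderiv w = u + X * (q * psderiv w) := by rw [← hdu]; exact hdw
    linear_combination h1
  have hdw0 : constantCoeff (psderiv w) = 1 := by
    have hcw : coeff 1 w = 1 := by
      have h01 : coeff (0 + 1) (X * u) = coeff 0 u := coeff_succ_X_mul 0 u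
      rw [hw, show (1 : ℕ) = 0 + 1 from rfl, h01, coeff_zero_eq_constantCoeff_apply, hu0]
    rw [← coeff_zero_eq_constantCoeff_apply, coeff_psderiv]
    rw [show (0 : ℕ) + 1 = 1 from rfl, hcw]
    simp
  have hdwU : IsUnit (psderiv w) := isUnit_iff_constantCoeff.2 (by rw [hdw0]; exact isUnit_one)
  have hCu : Cs * psderiv w = u ^ 2 := by
    have h2 : X ^ 2 * (Cs * psderiv w) = X ^ 2 * u ^ 2 := by
      calc X ^ 2 * (Cs * psderiv w) = Cs * X ^ 2 * psderiv w := by ring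
        _ = w ^ 2 := hC
        _ = X ^ 2 * u ^ 2 := by rw [hw]; ring
    exact X_pow_mul_cancel h2
  have part1 : Cs = u - w * q := by
    have h3 : psderiv w * Cs = psderiv w * (u * (1 - X * q)) := by
      calc psderiv w * Cs = u ^ 2 := by rw [mul_comm]; exact hCu
        _ = u * (psderiv w * (1 - X * q)) := by rw [F6]; ring
        _ = psderiv w * (u * (1 - X * q)) := by ring
    have h4 := hdwU.mul_left_cancel h3
    rw [h4, hw]; ring
  refine ⟨part1, ?_⟩
  intro k hk
  obtain ⟨m, rfl⟩ : ∃ m, k = m + 2 := ⟨k - 2, by omega⟩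
  -- inverse of u
  obtain ⟨U, hU⟩ := huU
  set v := ((U⁻¹ : (PowerSeries A)ˣ) : PowerSeries A) with hv
  have huv : u * v = 1 := by rw [← hU, hv]; exact U.mul_inv
  have hv0 : constantCoeff v = 1 := by
    have := congrArg constantCoeff huv
    rw [map_mul, hu0, one_mul, map_one] at this
    exact this
  have hdots : u * psderiv v + v * psderiv u = 0 := by
    have h5 : psderiv (u * v) = 0 := by rw [huv]; exact psderiv_one
    rw [psderiv_mul] at h5
    exact h5
  have hdv : psderiv v = -(v ^ 2 * psderiv u) := by
    calc psderiv v = psderiv v * (u * v) := by rw [huv, mul_one]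
      _ = (u * psderiv v + v * psderiv u) * v - v ^ 2 * psderiv u := by ring
      _ = -(v ^ 2 * psderiv u) := by rw [hdots]; ring
  have claimA : ∀ t : ℕ, coeff (t + 1) (v ^ (t + 2) * psderiv w) = 0 := by
    intro t
    have e1 : v ^ (t + 2) * psderiv w = v ^ (t + 1) + X * (v ^ (t + 2) * psderiv u) := by
      calc v ^ (t + 2) * psderiv w
          = v ^ (t + 1) * (u * v) + X * (v ^ (t + 2) * psderiv u) := by rw [hdw]; ring
        _ = v ^ (t + 1) + X * (v ^ (t + 2) * psderiv u) := by rw [huv]; ring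
    rw [e1, map_add, coeff_succ_X_mul]
    have l2 : psderiv (v ^ (t + 1))
        = -(((t + 1 : ℕ) : PowerSeries A) * (v ^ (t + 2) * psderiv u)) := by
      rw [psderiv_pow, hdv]
      simp only [Nat.add_sub_cancel]
      push_cast
      ring
    have l1 : ((t : A) + 1) * coeff (t + 1) (v ^ (t + 1))
        = -(((t + 1 : ℕ) : A) * coeff t (v ^ (t + 2) * psderiv u)) := by
      rw [← coeff_psderiv, l2, map_neg, ← map_natCast (C (R := A)) (t + 1), coeff_C_mul]
    apply natCast_mul_cancel (show t + 1 ≠ 0 by omega) (y := (0 : A))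
    rw [mul_zero, mul_add, show ((t + 1 : ℕ) : A) = ((t : A) + 1) by push_cast; ring, l1]
    push_cast
    ring
  have core2 : ∀ t : ℕ, coeff m (w ^ t * psderiv w)
      = coeff (m + 1) (X ^ (t + 1) * φ ^ (m + 1)) := by
    intro t
    by_cases htm : t ≤ m
    · set M := m - t with hM
      set f := φ ^ (m + 1) with hf
      have hun : u ^ (m + 1) = pscomp f w := by
        rw [hf, hu]; exact (pscomp_pow hw0 φ (m + 1)).symm
      set G := pscomp (tail (M + 1) f) w with hG
      have dec : pscomp f w = (∑ r ∈ Finset.range (M + 1), C (coeff r f) * w ^ r)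
          + w ^ (M + 1) * G := pscomp_decomp hw0 (M + 1) f
      have hwr : ∀ r : ℕ, w ^ r = X ^ r * u ^ r := fun r => by rw [hw, mul_pow]
      have hpow : ∀ a b : ℕ, v ^ a * u ^ (a + b) = u ^ b := by
        intro a b
        rw [pow_add, ← mul_assoc, ← mul_pow, mul_comm v u, huv, one_pow, one_mul]
      have lhsmul : u ^ (M + 1) * (w ^ t * psderiv w)
          = (∑ r ∈ Finset.range (M + 1), C (coeff r f) * X ^ (r + t) * u ^ r) * psderiv w
            + X ^ (m + 1) * (u ^ (M + 1) * (G * psderiv w)) := by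
        have e0 : u ^ (M + 1) * w ^ t = X ^ t * u ^ (m + 1) := by
          calc u ^ (M + 1) * w ^ t = X ^ t * (u ^ (M + 1) * u ^ t) := by rw [hwr t]; ring
            _ = X ^ t * u ^ (M + 1 + t) := by rw [← pow_add]
            _ = X ^ t * u ^ (m + 1) := by rw [show M + 1 + t = m + 1 by omega]
        calc u ^ (M + 1) * (w ^ t * psderiv w)
            = (u ^ (M + 1) * w ^ t) * psderiv w := by ring
          _ = (X ^ t * u ^ (m + 1)) * psderiv w := by rw [e0]
          _ = (X ^ t * ((∑ r ∈ Finset.range (M + 1), C (coeff r f) * w ^ r)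
                + w ^ (M + 1) * G)) * psderiv w := by rw [hun, dec]
          _ = (∑ r ∈ Finset.range (M + 1), X ^ t * (C (coeff r f) * w ^ r)) * psderiv w
                + (X ^ t * (w ^ (M + 1) * G)) * psderiv w := by
              rw [mul_add, Finset.mul_sum, add_mul]
          _ = (∑ r ∈ Finset.range (M + 1), C (coeff r f) * X ^ (r + t) * u ^ r) * psderiv w
                + X ^ (m + 1) * (u ^ (M + 1) * (G * psderiv w)) := by
              congr 1
              · congr 1
                refine Finset.sum_congr rfl fun r _ => ?_
                rw [hwr r, pow_add]
                ring
              · rw [hwr (M + 1), show m + 1 = t + (M + 1) by omega, pow_add X t (M + 1)]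
                ring
      have rhsmul : u ^ (M + 1) *
            ((∑ r ∈ Finset.range (M + 1), C (coeff r f) * X ^ (r + t) * v ^ (M + 1 - r))
              * psderiv w + X ^ (m + 1) * (G * psderiv w))
          = (∑ r ∈ Finset.range (M + 1), C (coeff r f) * X ^ (r + t) * u ^ r) * psderiv w
            + X ^ (m + 1) * (u ^ (M + 1) * (G * psderiv w)) := by
        rw [mul_add, Finset.sum_mul, Finset.sum_mul, Finset.mul_sum]
        congr 1
        · refine Finset.sum_congr rfl fun r hr => ?_
          rw [Finset.mem_range] at hr
          have hp := hpow (M + 1 - r) r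
          rw [show M + 1 - r + r = M + 1 by omega] at hp
          calc u ^ (M + 1) * (C (coeff r f) * X ^ (r + t) * v ^ (M + 1 - r) * psderiv w)
              = C (coeff r f) * X ^ (r + t) * (v ^ (M + 1 - r) * u ^ (M + 1))
                  * psderiv w := by ring
            _ = C (coeff r f) * X ^ (r + t) * u ^ r * psderiv w := by rw [hp]
        · ring
      have diamond : w ^ t * psderiv w
          = (∑ r ∈ Finset.range (M + 1), C (coeff r f) * X ^ (r + t) * v ^ (M + 1 - r))
              * psderiv w + X ^ (m + 1) * (G * psderiv w) := by
        apply ((IsUnit.of_mul_eq_one v huv).pow (M + 1)).mul_left_cancel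
        rw [lhsmul, rhsmul]
      rw [coeff_X_pow_mul', if_pos (show t + 1 ≤ m + 1 by omega),
        show m + 1 - (t + 1) = M by omega]
      rw [diamond, map_add]
      have tailzero : coeff m (X ^ (m + 1) * (G * psderiv w)) = 0 := by
        rw [coeff_X_pow_mul', if_neg (show ¬ (m + 1 ≤ m) by omega)]
      rw [tailzero, add_zero, Finset.sum_mul, map_sum]
      have h0 : ∀ r ∈ Finset.range (M + 1), r ≠ M →
          coeff m (C (coeff r f) * X ^ (r + t) * v ^ (M + 1 - r) * psderiv w) = 0 := by
        intro r hr hrM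
        rw [Finset.mem_range] at hr
        have e4 : C (coeff r f) * X ^ (r + t) * v ^ (M + 1 - r) * psderiv w
            = C (coeff r f) * (X ^ (r + t) * (v ^ (M - r - 1 + 2) * psderiv w)) := by
          rw [show M + 1 - r = M - r - 1 + 2 by omega]
          ring
        rw [e4, coeff_C_mul, coeff_X_pow_mul', if_pos (show r + t ≤ m by omega),
          show m - (r + t) = M - r - 1 + 1 by omega, claimA (M - r - 1), mul_zero]
      have h1 : coeff m (C (coeff M f) * X ^ (M + t) * v ^ (M + 1 - M) * psderiv w)
          = coeff M f := by
        have e3 : C (coeff M f) * X ^ (M + t) * v ^ (M + 1 - M) * psderiv w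
            = C (coeff M f) * (X ^ m * (v * psderiv w)) := by
          rw [show M + 1 - M = 1 by omega, show M + t = m by omega, pow_one]
          ring
        rw [e3, coeff_C_mul, coeff_X_pow_mul', if_pos (le_refl m), Nat.sub_self,
          coeff_zero_eq_constantCoeff_apply, map_mul, hv0, hdw0, mul_one, mul_one]
      rw [Finset.sum_eq_single M h0 (fun hM' => absurd (Finset.self_mem_range_succ M) hM'), h1]
    · rw [coeff_pow_mul_zero hw0 _ (show m < t by omega),
        coeff_X_pow_mul', if_neg (show ¬ (t + 1 ≤ m + 1) by omega)]
  set ψ := psderiv (psderiv φ) with hψdef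
  have hdq : psderiv q = pscomp ψ w * psderiv w := by
    rw [hq, hψdef]; exact psderiv_pscomp hw0 (psderiv φ)
  have hdC : psderiv Cs = -(w * pscomp ψ w * psderiv w) := by
    rw [part1, psderiv_sub, psderiv_mul, hdu, hdq]; ring
  have G3 : coeff (m + 1) (X * w * pscomp ψ w * psderiv w)
      = coeff (m + 1) (X ^ 2 * ψ * φ ^ (m + 1)) := by
    have l : X * w * pscomp ψ w * psderiv w = (X * w * psderiv w) * pscomp ψ w := by ring
    have r : X ^ 2 * ψ * φ ^ (m + 1) = (X ^ 2 * φ ^ (m + 1)) * pscomp ψ X := by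
      rw [pscomp_X_right]; ring
    rw [l, coeff_mul_pscomp hw0, r, coeff_mul_pscomp constantCoeff_X]
    refine Finset.sum_congr rfl fun s _ => ?_
    congr 1
    have l2 : X * w * psderiv w * w ^ s = X * (w ^ (s + 1) * psderiv w) := by ring
    have r2 : X ^ 2 * φ ^ (m + 1) * X ^ s = X ^ (s + 1 + 1) * φ ^ (m + 1) := by ring
    rw [l2, r2, coeff_succ_X_mul]
    exact core2 (s + 1)
  have hnc : ((m + 1 : ℕ) : A) * coeff (m + 1) Cs
      = - coeff (m + 1) (X ^ 2 * ψ * φ ^ (m + 1)) := by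
    have c1 : coeff (m + 1) (X * psderiv Cs) = ((m + 1 : ℕ) : A) * coeff (m + 1) Cs := by
      rw [coeff_succ_X_mul, coeff_psderiv]
      push_cast
      ring
    rw [← c1, hdC, show X * -(w * pscomp ψ w * psderiv w)
      = -(X * w * pscomp ψ w * psderiv w) by ring, map_neg, G3]
  have hidx : m + 2 - 1 = m + 1 := rfl
  rw [hidx]
  have hne : ((m + 1 : ℕ) : ℚ) ≠ 0 := by
    exact_mod_cast Nat.succ_ne_zero m
  have hsm : ∀ x : A, ((m + 1 : ℕ) : ℚ) • x = ((m + 1 : ℕ) : A) * x := by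
    intro x; rw [Algebra.smul_def, map_natCast]
  have hscalar : (-(1 / (((m + 2 : ℕ) : ℚ) - 1))) = (-(1 / ((m + 1 : ℕ) : ℚ))) := by
    push_cast; ring_nf
  rw [hscalar]
  calc coeff (m + 1) Cs
      = (1 / ((m + 1 : ℕ) : ℚ)) • (((m + 1 : ℕ) : ℚ) • coeff (m + 1) Cs) := by
        rw [smul_smul, one_div, inv_mul_cancel₀ hne, one_smul]
    _ = (1 / ((m + 1 : ℕ) : ℚ)) • (-(coeff (m + 1) (X ^ 2 * ψ * φ ^ (m + 1)))) := by
        rw [hsm, hnc]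
    _ = (-(1 / ((m + 1 : ℕ) : ℚ))) • coeff (m + 1) (X ^ 2 * ψ * φ ^ (m + 1)) := by
        rw [smul_neg, neg_smul]

end LIF


/-- Let `φ` have constant term `1`, `w = zφ(w)`, and let
`C(z) = 1/(-z² d/dz (1/w))`, i.e. `C · z² · w' = w²`. Then
`C(z) = φ(w) - w φ'(w)`, and for all `k ≥ 2`,
`[z^{k-1}] C(z) = -(1/(k-1)) [y^{k-3}] φ''(y) φ(y)^{k-1}`
(the right side written as `[y^{k-1}] (y² φ''(y) φ(y)^{k-1})` so that it
vanishes, as it should, when `k = 2`). -/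
theorem c_series_formula {A : Type*} [CommRing A] [Algebra ℚ A]
    (φ w Cs : PowerSeries A)
    (hφ0 : PowerSeries.constantCoeff φ = 1)
    (hw0 : PowerSeries.constantCoeff w = 0)
    (hw : w = PowerSeries.X * pscomp φ w)
    (hC : Cs * PowerSeries.X ^ 2 * psderiv w = w ^ 2) :
    Cs = pscomp φ w - w * pscomp (psderiv φ) w ∧
      ∀ k, 2 ≤ k →
        PowerSeries.coeff (k - 1) Cs =
          (-(1 / ((k : ℚ) - 1))) • PowerSeries.coeff (k - 1)
            (PowerSeries.X ^ 2 * psderiv (psderiv φ) * φ ^ (k - 1)) := by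
  exact LIF.main φ w Cs hφ0 hw0 hw hC
end
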